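/- Let n ≥ 1, let p₁,…,pₙ be integers, let S be the diagonal vector field S(x) = (p₁x₁,…,pₙxₙ) on ℂⁿ, and let X : ℂⁿ → ℂⁿ be an entire holomorphic map that is not identically zero. If there is λ ∈ ℂ such that [S,X](x) := DX(x)(S(x)) - S(X(x)) = λ·X(x) for all x ∈ ℂⁿ, then λ is an integer. -/

import Mathlib

open Complex

/-- If a complex-differentiable `f : ℂ → ℂ` has `deriv f t = a * f t` everywhere,
then `exp (-a*t) * f t` is constant. -/
lemma const_of_ode (f : ℂ → ℂ) (a : ℂ)
    (hf : ∀ t, HasDerivAt f (a * f t) t) (s t : ℂ) :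
    Complex.exp (-a * s) * f s = Complex.exp (-a * t) * f t := by
  set g : ℂ → ℂ := fun u => Complex.exp (-a * u) * f u with hg
  have hd : ∀ u, HasDerivAt g 0 u := by
    intro u
    have h1 : HasDerivAt (fun u : ℂ => Complex.exp (-a * u)) (Complex.exp (-a * u) * (-a)) u :=
      by simpa using ((hasDerivAt_id u).const_mul (-a)).cexp
    have := h1.mul (hf u)
    refine this.congr_deriv ?_
    ring
  have hdiff : Differentiable ℝ g := fun u => ((hd u).differentiableAt.restrictScalars ℝ)
  have hfz : ∀ u, fderiv ℝ g u = 0 := by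
    intro u
    have h2 : HasFDerivAt g ((1 : ℂ →L[ℂ] ℂ).smulRight (0 : ℂ)) u := (hd u).hasFDerivAt
    have h3 : HasFDerivAt g (((1 : ℂ →L[ℂ] ℂ).smulRight (0 : ℂ)).restrictScalars ℝ) u :=
      h2.restrictScalars ℝ
    rw [h3.fderiv]
    ext v
    simp
  exact is_const_of_fderiv_eq_zero hdiff hfz s t

/-- Proposition 2.1(a): if `X` is an entire holomorphic vector field on `ℂⁿ`,
not identically zero, and `[S,X] = λ·X` where `S(x) = (p₁x₁,…,pₙxₙ)` with
integer `pᵢ`, then `λ` is an integer. -/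
theorem stmt3 (n : ℕ) (hn : 1 ≤ n) (p : Fin n → ℤ)
    (X : (Fin n → ℂ) → (Fin n → ℂ)) (hX : Differentiable ℂ X)
    (hX0 : ∃ x, X x ≠ 0) (lam : ℂ)
    (h : ∀ x : Fin n → ℂ,
      (fderiv ℂ X x (fun i => (p i : ℂ) * x i)) - (fun i => (p i : ℂ) * X x i)
        = lam • X x) :
    ∃ m : ℤ, lam = (m : ℂ) := by
  obtain ⟨x, hx⟩ := hX0
  obtain ⟨i, hi⟩ := Function.ne_iff.mp hx
  simp only [Pi.zero_apply] at hi
  -- the flow of S through x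
  set c : ℂ → (Fin n → ℂ) := fun t j => Complex.exp ((p j : ℂ) * t) * x j with hc
  have hcd : ∀ t, HasDerivAt c (fun j => (p j : ℂ) * c t j) t := by
    intro t
    rw [hasDerivAt_pi]
    intro j
    have h1 : HasDerivAt (fun u : ℂ => Complex.exp ((p j : ℂ) * u))
        (Complex.exp ((p j : ℂ) * t) * (p j : ℂ)) t :=
      by simpa using ((hasDerivAt_id t).const_mul ((p j : ℂ))).cexp
    have := h1.mul_const (x j)
    refine this.congr_deriv ?_
    simp only [hc]
    ring
  -- g t = X (c t) i satisfies g' = (lam + p i) g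
  set g : ℂ → ℂ := fun t => X (c t) i with hgdef
  have hgd : ∀ t, HasDerivAt g ((lam + (p i : ℂ)) * g t) t := by
    intro t
    have hcomp : HasDerivAt (fun u => X (c u))
        (fderiv ℂ X (c t) (fun j => (p j : ℂ) * c t j)) t :=
      ((hX (c t)).hasFDerivAt).comp_hasDerivAt t (hcd t)
    have := hasDerivAt_pi.mp hcomp i
    have hval : (fderiv ℂ X (c t) (fun j => (p j : ℂ) * c t j)) i
        = (lam + (p i : ℂ)) * X (c t) i := by
      have := congrFun (h (c t)) i
      simp only [Pi.sub_apply, Pi.smul_apply, smul_eq_mul] at this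
      linear_combination this
    rwa [hval] at this
  -- conclude using periodicity at t = 2πI
  have key := const_of_ode g (lam + (p i : ℂ)) hgd (2 * Real.pi * I) 0
  have hc0 : c 0 = x := by
    funext j; simp [hc]
  have hcT : c (2 * Real.pi * I) = x := by
    funext j
    simp only [hc]
    rw [Complex.exp_int_mul_two_pi_mul_I, one_mul]
  have hg0 : g 0 = X x i := by rw [hgdef]; simp [hc0]
  have hgT : g (2 * Real.pi * I) = X x i := by rw [hgdef]; simp [hcT]
  rw [hg0, hgT, mul_zero, Complex.exp_zero, one_mul] at key
  nth_rewrite 2 [← one_mul (X x i)] at key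
  have hexp : Complex.exp (-(lam + (p i : ℂ)) * (2 * Real.pi * I)) = 1 :=
    mul_right_cancel₀ hi key
  obtain ⟨m, hm⟩ := Complex.exp_eq_one_iff.mp hexp
  have h2pi : (2 * Real.pi * I : ℂ) ≠ 0 := by
    simp [Real.pi_ne_zero, Complex.I_ne_zero]
  have : -(lam + (p i : ℂ)) = (m : ℂ) := by
    have hm' : -(lam + (p i : ℂ)) * (2 * Real.pi * I) = (m : ℂ) * (2 * Real.pi * I) := by
      rw [hm]
    exact mul_right_cancel₀ h2pi hm'
  refine ⟨-m - p i, ?_⟩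
  push_cast
  linear_combination -this
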